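/- Let F be a field, let n ≥ 2, and fix k ≥ 2. Let t satisfy 2 ≤ t ≤ n and set r = n − t, and assume r < k − 2. Let C = ∑_{i=1}^{t−1} E_{i+1,i} ∈ M_n(F) and let N_C = E_{1,1} + E_{t,1} − E_{1,t+r} − ∑_{i=0}^{r} E_{t,t+i} + ∑_{i=0}^{r−1} E_{t+i+1,t+i}. Then N_C^k = 0 and the matrix C + N_C is invertible; indeed, C + N_C can be transformed by elementary row and column operations (which preserve invertibility) into the companion matrix of the polynomial x^n + x^t + 1, whose constant term is nonzero. -/
import Mathlib


/-- `Eunit F n a b` is the `n × n` matrix unit `E_{a,b}` over `F`, in **1-based**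
indexing: it has a `1` in row `a`, column `b` (`1 ≤ a, b ≤ n`) and `0` elsewhere. -/
def Eunit (F : Type*) [Field F] (n a b : ℕ) : Matrix (Fin n) (Fin n) F :=
  Matrix.of fun i j => if (i : ℕ) + 1 = a ∧ (j : ℕ) + 1 = b then 1 else 0

private lemma sum_two_aux {F : Type*} [Field F] {n : ℕ} (f : Fin n → F) (x y : Fin n)
    (hxy : x ≠ y) (h : ∀ b, b ≠ x → b ≠ y → f b = 0) : ∑ b, f b = f x + f y := by
  rw [← Finset.sum_pair hxy]
  refine (Finset.sum_subset (Finset.subset_univ _) fun b _ hb => ?_).symm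
  simp only [Finset.mem_insert, Finset.mem_singleton, not_or] at hb
  exact h b hb.1 hb.2

private lemma sum_one_aux {F : Type*} [Field F] {n : ℕ} (f : Fin n → F) (x : Fin n)
    (h : ∀ b, b ≠ x → f b = 0) : ∑ b, f b = f x :=
  Finset.sum_eq_single_of_mem x (Finset.mem_univ x) fun b _ hb => h b hb

set_option maxHeartbeats 1600000 in
/-- Let `n ≥ 2`, `k ≥ 2`, `2 ≤ t ≤ n`, `r = n - t` and `r < k - 2`. Let
`C = ∑_{i=1}^{t-1} E_{i+1,i} ∈ Mₙ(F)` be a single nilpotent Jordan block of size `t`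
(and zeros elsewhere) and
`N_C = E_{1,1} + E_{t,1} - E_{1,t+r} - ∑_{i=0}^{r} E_{t,t+i} + ∑_{i=0}^{r-1} E_{t+i+1,t+i}`.
Then `N_C ^ k = 0` and `C + N_C` is invertible (indeed, `C + N_C` can be transformed by
elementary row and column operations into the companion matrix of `x^n + x^t + 1`). -/
theorem jordan_block_add_explicit_nilpotent_isUnit
    (F : Type*) [Field F] (n k t r : ℕ) (hn : 2 ≤ n) (hk : 2 ≤ k)
    (ht : 2 ≤ t) (htn : t ≤ n) (hrdef : r = n - t) (hrk : r < k - 2)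
    (C : Matrix (Fin n) (Fin n) F)
    (hC : C = Matrix.of fun i j : Fin n =>
      if (i : ℕ) = (j : ℕ) + 1 ∧ (i : ℕ) < t then 1 else 0)
    (NC : Matrix (Fin n) (Fin n) F)
    (hNC : NC = Eunit F n 1 1 + Eunit F n t 1 - Eunit F n 1 (t + r)
      - ∑ i ∈ Finset.range (r + 1), Eunit F n t (t + i)
      + ∑ i ∈ Finset.range r, Eunit F n (t + i + 1) (t + i)) :
    NC ^ k = 0 ∧ IsUnit (C + NC) := by
  have htr : t + r = n := by omega
  -- entrywise formula for the two sums
  have hS1 : ∀ a b : Fin n, (∑ i ∈ Finset.range (r+1), Eunit F n t (t+i)) a b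
      = if (a:ℕ)+1 = t ∧ t ≤ (b:ℕ)+1 ∧ (b:ℕ)+1 ≤ t+r then 1 else 0 := by
    intro a b
    rw [Matrix.sum_apply]
    simp only [Eunit, Matrix.of_apply]
    by_cases h : (a:ℕ)+1 = t ∧ t ≤ (b:ℕ)+1 ∧ (b:ℕ)+1 ≤ t+r
    · rw [if_pos h, Finset.sum_eq_single ((b:ℕ)+1-t)]
      · rw [if_pos ⟨h.1, by omega⟩]
      · intro i _ hne
        rw [if_neg]
        rintro ⟨h1, h2⟩
        exact hne (by omega)
      · intro hmem
        exact absurd (Finset.mem_range.mpr (by omega)) hmem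
    · rw [if_neg h]
      refine Finset.sum_eq_zero fun i hi => ?_
      rw [Finset.mem_range] at hi
      rw [if_neg]
      rintro ⟨h1, h2⟩
      exact h ⟨h1, by omega, by omega⟩
  have hS2 : ∀ a b : Fin n, (∑ i ∈ Finset.range r, Eunit F n (t+i+1) (t+i)) a b
      = if t ≤ (b:ℕ)+1 ∧ (b:ℕ)+1 ≤ t+r-1 ∧ (a:ℕ) = (b:ℕ)+1 then 1 else 0 := by
    intro a b
    rw [Matrix.sum_apply]
    simp only [Eunit, Matrix.of_apply]
    by_cases h : t ≤ (b:ℕ)+1 ∧ (b:ℕ)+1 ≤ t+r-1 ∧ (a:ℕ) = (b:ℕ)+1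
    · rw [if_pos h, Finset.sum_eq_single ((b:ℕ)+1-t)]
      · rw [if_pos ⟨by omega, by omega⟩]
      · intro i _ hne
        rw [if_neg]
        rintro ⟨h1, h2⟩
        exact hne (by omega)
      · intro hmem
        exact absurd (Finset.mem_range.mpr (by omega)) hmem
    · rw [if_neg h]
      refine Finset.sum_eq_zero fun i hi => ?_
      rw [Finset.mem_range] at hi
      rw [if_neg]
      rintro ⟨h1, h2⟩
      exact h ⟨by omega, by omega, by omega⟩
  -- entrywise formula for NC
  have hNCa : ∀ a b : Fin n, NC a b
      = (if (a:ℕ)+1 = 1 ∧ (b:ℕ)+1 = 1 then 1 else 0)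
      + (if (a:ℕ)+1 = t ∧ (b:ℕ)+1 = 1 then 1 else 0)
      - (if (a:ℕ)+1 = 1 ∧ (b:ℕ)+1 = t+r then 1 else 0)
      - (if (a:ℕ)+1 = t ∧ t ≤ (b:ℕ)+1 ∧ (b:ℕ)+1 ≤ t+r then 1 else 0)
      + (if t ≤ (b:ℕ)+1 ∧ (b:ℕ)+1 ≤ t+r-1 ∧ (a:ℕ) = (b:ℕ)+1 then 1 else 0) := by
    intro a b
    rw [hNC]
    simp only [Matrix.add_apply, Matrix.sub_apply]
    rw [hS1, hS2]
    simp only [Eunit, Matrix.of_apply]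
  -- the chain vectors z j = e₁ + e_{t+j}
    -- (1-based index t+j; 0-based t+j-1)
  set z : ℕ → Fin n → F := fun j a =>
    (if (a:ℕ) = 0 then 1 else 0) + (if (a:ℕ)+1 = t+j then 1 else 0) with hzdef
  have hz : ∀ j, j ≤ r → NC.mulVec (z j) = (if j < r then z (j+1) else 0) := by
    intro j hj
    funext a
    have hxv : (0:ℕ) < n := by omega
    have hyv : t+j-1 < n := by omega
    show ∑ b, NC a b * z j b = _
    rw [sum_two_aux _ ⟨0, hxv⟩ ⟨t+j-1, hyv⟩ (by simp [Fin.ext_iff]; omega)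
      (fun b hb1 hb2 => by
        have h1 : (b:ℕ) ≠ 0 := by simpa [Fin.ext_iff] using hb1
        have h2 : (b:ℕ) ≠ t+j-1 := by simpa [Fin.ext_iff] using hb2
        have : z j b = 0 := by simp only [hzdef]; rw [if_neg h1, if_neg (by omega)]; ring
        rw [this, mul_zero])]
    have hv1 : z j ⟨0, hxv⟩ = 1 := by
      simp only [hzdef, Fin.val_mk, and_true, true_and, and_false, false_and]
      split_ifs <;> first | ring1 | (exfalso; omega)
    have hv2 : z j ⟨t+j-1, hyv⟩ = 1 := by
      simp only [hzdef, Fin.val_mk, and_true, true_and, and_false, false_and]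
      split_ifs <;> first | ring1 | (exfalso; omega)
    have e1 : NC a ⟨0, hxv⟩ = (if (a:ℕ) = 0 then 1 else 0) + (if (a:ℕ)+1 = t then 1 else 0) := by
      rw [hNCa]
      simp only [Fin.val_mk, and_true, true_and, and_false, false_and]
      split_ifs <;> first | ring1 | (exfalso; omega)
    have e2 : NC a ⟨t+j-1, hyv⟩ = (if j < r ∧ (a:ℕ) = t+j then 1 else 0)
        - (if (a:ℕ) = 0 ∧ j = r then 1 else 0) - (if (a:ℕ)+1 = t then 1 else 0) := by
      rw [hNCa]
      simp only [Fin.val_mk, and_true, true_and, and_false, false_and]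
      split_ifs <;> first | ring1 | (exfalso; omega)
    rw [hv1, hv2, mul_one, mul_one, e1, e2]
    by_cases hjr : j < r
    · rw [if_pos hjr]
      simp only [hzdef, and_true, true_and, and_false, false_and]
      split_ifs <;> first | ring1 | (exfalso; omega)
    · rw [if_neg hjr]
      show _ = (0:F)
      split_ifs <;> first | ring1 | (exfalso; omega)
  have hzpow : ∀ m, ∀ j, j ≤ r → (NC^m).mulVec (z j) = (if j + m ≤ r then z (j+m) else 0) := by
    intro m
    induction m with
    | zero =>
      intro j hj
      rw [pow_zero, Matrix.one_mulVec, if_pos (show j + 0 ≤ r by omega), Nat.add_zero]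
    | succ m ih =>
      intro j hj
      rw [pow_succ, ← Matrix.mulVec_mulVec, hz j hj]
      by_cases hjr : j < r
      · rw [if_pos hjr, ih (j+1) (by omega), show j + 1 + m = j + (m+1) by omega]
      · rw [if_neg hjr, Matrix.mulVec_zero, if_neg (by omega)]
  -- NC^(r+2) = 0
  have hNr2 : NC^(r+2) = 0 := by
    have hsplit : NC^(r+2) = NC^(r+1) * NC := by rw [← pow_succ]
    ext a b
    rw [hsplit, Matrix.mul_apply, Matrix.zero_apply]
    have hkey : ∑ c, (NC^(r+1)) a c * NC c b = ((NC^(r+1)).mulVec (fun c => NC c b)) a := rfl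
    rw [hkey]
    by_cases hb0 : (b:ℕ) = 0
    · have hc : (fun c => NC c b) = z 0 := by
        funext c
        rw [hNCa]
        simp only [hzdef, and_true, true_and, and_false, false_and]
        split_ifs <;> first | ring1 | (exfalso; omega)
      rw [hc, hzpow (r+1) 0 (by omega), if_neg (by omega)]
      rfl
    · by_cases hbt : (b:ℕ)+1 < t
      · have hc : (fun c => NC c b) = (0 : Fin n → F) := by
          funext c
          rw [hNCa]
          show _ = (0:F)
          split_ifs <;> first | ring1 | (exfalso; omega)
        rw [hc, Matrix.mulVec_zero]
        rfl
      · by_cases hbr : (b:ℕ)+1 < t+r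
        · have hc : (fun c => NC c b) = z ((b:ℕ)+2-t) - z 0 := by
            funext c
            rw [hNCa]
            simp only [Pi.sub_apply, hzdef, and_true, true_and, and_false, false_and]
            split_ifs <;> first | ring1 | (exfalso; omega)
          rw [hc, Matrix.mulVec_sub, hzpow (r+1) ((b:ℕ)+2-t) (by omega),
            hzpow (r+1) 0 (by omega), if_neg (by omega), if_neg (by omega)]
          simp
        · have hc : (fun c => NC c b) = -(z 0) := by
            funext c
            rw [hNCa]
            simp only [Pi.neg_apply, hzdef, and_true, true_and, and_false, false_and]
            split_ifs <;> first | ring1 | (exfalso; omega)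
          rw [hc, Matrix.mulVec_neg, hzpow (r+1) 0 (by omega), if_neg (by omega)]
          simp
  have hNk : NC^k = 0 := by
    have hks : NC^k = NC^(r+2) * NC^(k-(r+2)) := by
      rw [← pow_add]
      congr 1
      omega
    rw [hks, hNr2, Matrix.zero_mul]
  refine ⟨hNk, ?_⟩
  -- Invertibility via injectivity of mulVec
  have hMa : ∀ a b : Fin n, (C + NC) a b
      = (if (a:ℕ) = (b:ℕ)+1 ∧ (a:ℕ) < t then 1 else 0)
      + ((if (a:ℕ)+1 = 1 ∧ (b:ℕ)+1 = 1 then 1 else 0)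
      + (if (a:ℕ)+1 = t ∧ (b:ℕ)+1 = 1 then 1 else 0)
      - (if (a:ℕ)+1 = 1 ∧ (b:ℕ)+1 = t+r then 1 else 0)
      - (if (a:ℕ)+1 = t ∧ t ≤ (b:ℕ)+1 ∧ (b:ℕ)+1 ≤ t+r then 1 else 0)
      + (if t ≤ (b:ℕ)+1 ∧ (b:ℕ)+1 ≤ t+r-1 ∧ (a:ℕ) = (b:ℕ)+1 then 1 else 0)) := by
    intro a b
    rw [Matrix.add_apply, hNCa, hC]
    rfl
  have hinj : ∀ v : Fin n → F, (C + NC).mulVec v = 0 → v = 0 := by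
    intro v hv
    have hrow : ∀ a : Fin n, ∑ b, (C + NC) a b * v b = 0 := fun a => congrFun hv a
    -- Step A: rows 2..n other than row t kill most coordinates
    have hA : ∀ j : Fin n, (j:ℕ) + 2 ≤ n → (j:ℕ) + 2 ≠ t → v j = 0 := by
      intro j hj1 hj2
      have ha : (j:ℕ)+1 < n := by omega
      have h0 := hrow ⟨(j:ℕ)+1, ha⟩
      rw [sum_one_aux _ j (fun b hb => by
        have hbj : (b:ℕ) ≠ (j:ℕ) := fun h => hb (Fin.ext h)
        have hent : (C + NC) ⟨(j:ℕ)+1, ha⟩ b = 0 := by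
          rw [hMa]
          simp only [Fin.val_mk, and_true, true_and, and_false, false_and]
          split_ifs <;> first | ring1 | (exfalso; omega)
        rw [hent, zero_mul])] at h0
      have hent : (C + NC) ⟨(j:ℕ)+1, ha⟩ j = 1 := by
        rw [hMa]
        simp only [Fin.val_mk, and_true, true_and, and_false, false_and]
        split_ifs <;> first | ring1 | (exfalso; omega)
      rw [hent, one_mul] at h0
      exact h0
    obtain ⟨x0, hx0d⟩ : ∃ x0 : Fin n, (x0:ℕ) = 0 := ⟨⟨0, by omega⟩, rfl⟩
    obtain ⟨xn, hxnd⟩ : ∃ xn : Fin n, (xn:ℕ) = n-1 := ⟨⟨n-1, by omega⟩, rfl⟩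
    obtain ⟨xt, hxtd⟩ : ∃ xt : Fin n, (xt:ℕ) = t-2 := ⟨⟨t-2, by omega⟩, rfl⟩
    -- Step B: row 1 gives v x0 = v xn
    have hB : v x0 = v xn := by
      have h0 := hrow x0
      rw [sum_two_aux _ x0 xn (by rw [Ne, Fin.ext_iff]; omega)
        (fun b hb1 hb2 => by
          have h1 : (b:ℕ) ≠ (x0:ℕ) := fun h => hb1 (Fin.ext h)
          have h2 : (b:ℕ) ≠ (xn:ℕ) := fun h => hb2 (Fin.ext h)
          have hent : (C + NC) x0 b = 0 := by
            rw [hMa]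
            split_ifs <;> first | ring1 | (exfalso; omega)
          rw [hent, zero_mul])] at h0
      have he1 : (C + NC) x0 x0 = 1 := by
        rw [hMa]
        split_ifs <;> first | ring1 | (exfalso; omega)
      have he2 : (C + NC) x0 xn = -1 := by
        rw [hMa]
        split_ifs <;> first | ring1 | (exfalso; omega)
      rw [he1, he2] at h0
      have : v x0 - v xn = 0 := by linear_combination h0
      linear_combination this
    -- all coordinates except xt, xn vanish
    have hvan : ∀ b : Fin n, b ≠ xt → b ≠ xn → v b = 0 := by
      intro b h1 h2
      have hb1 : (b:ℕ) ≠ (xt:ℕ) := fun h => h1 (Fin.ext h)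
      have hb2 : (b:ℕ) ≠ (xn:ℕ) := fun h => h2 (Fin.ext h)
      exact hA b (by omega) (by omega)
    -- Step C: row t
    have htlt : t-1 < n := by omega
    have hC3 := hrow ⟨t-1, htlt⟩
    rw [sum_two_aux _ xt xn (by rw [Ne, Fin.ext_iff]; omega)
      (fun b hb1 hb2 => by rw [hvan b hb1 hb2, mul_zero])] at hC3
    have he2 : (C + NC) ⟨t-1, htlt⟩ xn = -1 := by
      rw [hMa]
      simp only [Fin.val_mk, and_true, true_and, and_false, false_and]
      split_ifs <;> first | ring1 | (exfalso; omega)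
    rw [he2] at hC3
    have hzero : v xt = 0 ∧ v xn = 0 := by
      by_cases ht2 : t = 2
      · have hxt0 : xt = x0 := by
          rw [Fin.ext_iff]
          omega
        have he1 : (C + NC) ⟨t-1, htlt⟩ xt = 2 := by
          rw [hMa]
          simp only [Fin.val_mk, and_true, true_and, and_false, false_and]
          split_ifs <;> first | ring1 | (exfalso; omega)
        rw [he1, hxt0] at hC3
        have hv0 : v x0 = 0 := by linear_combination hC3 - hB
        rw [hxt0]
        exact ⟨hv0, hB ▸ hv0⟩
      · have hv0 : v x0 = 0 := hA x0 (by omega) (by omega)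
        have hvn : v xn = 0 := hB ▸ hv0
        have he1 : (C + NC) ⟨t-1, htlt⟩ xt = 1 := by
          rw [hMa]
          simp only [Fin.val_mk, and_true, true_and, and_false, false_and]
          split_ifs <;> first | ring1 | (exfalso; omega)
        rw [he1, hvn] at hC3
        have : v xt = 0 := by linear_combination hC3
        exact ⟨this, hvn⟩
    funext j
    show v j = 0
    by_cases h1 : j = xt
    · rw [h1]; exact hzero.1
    · by_cases h2 : j = xn
      · rw [h2]; exact hzero.2
      · exact hvan j h1 h2
  have hdet : (C + NC).det ≠ 0 := by
    intro h
    obtain ⟨v, hv0, hv⟩ := Matrix.exists_mulVec_eq_zero_iff.mpr h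
    exact hv0 (hinj v hv)
  exact (Matrix.isUnit_iff_isUnit_det _).mpr (isUnit_iff_ne_zero.mpr hdet)
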